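/- For nonlinear finite Blaschke products a and b, the composition a ∘ b is totally ramified if and only if both a and b are totally ramified and the unique critical point of a equals the unique critical value of b. -/

import Mathlib

/-- The open unit disk in `ℂ`. -/
def unitDisk : Set ℂ := Metric.ball 0 1

/-- The rational function `ρ · ∏ᵢ (z - aᵢ)/(1 - conj(aᵢ)·z)`. -/
noncomputable def blaschkeFun (ρ : ℂ) (l : List ℂ) (z : ℂ) : ℂ :=
  ρ * (l.map fun a => (z - a) / (1 - (starRingEnd ℂ) a * z)).prod

/-- `f` is a finite Blaschke product of degree `n`. -/
def IsBlaschke (n : ℕ) (f : ℂ → ℂ) : Prop :=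
  ∃ (ρ : ℂ) (l : List ℂ), ‖ρ‖ = 1 ∧ (∀ a ∈ l, ‖a‖ < 1) ∧
    l.length = n ∧ ∀ z, f z = blaschkeFun ρ l z

/-- `f` is a holomorphic automorphism of the unit disk, i.e. a degree one
Blaschke product. -/
def IsDiskAut (f : ℂ → ℂ) : Prop := IsBlaschke 1 f

/-- `f` is totally ramified of degree `n`: it is associated to `z ^ n` via pre-
and post-composition with disk automorphisms. -/
def IsTotallyRamified (n : ℕ) (f : ℂ → ℂ) : Prop :=
  ∃ ε δ : ℂ → ℂ, IsDiskAut ε ∧ IsDiskAut δ ∧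
    Set.EqOn f (ε ∘ (fun z => z ^ n) ∘ δ) unitDisk

/-- the complex absolute value, as a bundled absolute value (removed from Mathlib) -/
noncomputable def Complex.abs : AbsoluteValue ℂ ℝ :=
  IsAbsoluteValue.toAbsoluteValue (fun z : ℂ => ‖z‖)
lemma Complex.abs_conj (z : ℂ) : Complex.abs ((starRingEnd ℂ) z) = Complex.abs z :=
  Complex.norm_conj z
lemma Complex.abs_apply (z : ℂ) : Complex.abs z = Real.sqrt (Complex.normSq z) :=
  Complex.norm_def z
lemma Complex.sq_abs (z : ℂ) : Complex.abs z ^ 2 = Complex.normSq z := Complex.sq_norm z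
lemma Complex.normSq_eq_abs (z : ℂ) : Complex.normSq z = Complex.abs z ^ 2 :=
  Complex.normSq_eq_norm_sq z

section
open Polynomial Complex Set Filter

namespace BP
lemma mem_unitDisk {z : ℂ} : z ∈ unitDisk ↔ Complex.abs z < 1 := by
  simp [unitDisk, Metric.mem_ball, Complex.dist_eq]; rfl
lemma one_sub_ne {a z : ℂ} (ha : Complex.abs a < 1) (hz : Complex.abs z ≤ 1) :
    1 - (starRingEnd ℂ) a * z ≠ 0 := by
  intro h
  have h1 : (1 : ℂ) = (starRingEnd ℂ) a * z := by linear_combination h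
  have := congrArg Complex.abs h1
  simp only [map_mul, map_one, Complex.abs_conj] at this
  nlinarith [Complex.abs.nonneg a, Complex.abs.nonneg z]
lemma normSq_identity (a z : ℂ) :
    Complex.normSq (1 - (starRingEnd ℂ) a * z) - Complex.normSq (z - a)
      = (1 - Complex.normSq a) * (1 - Complex.normSq z) := by
  have h1 := Complex.mul_conj (1 - (starRingEnd ℂ) a * z)
  have h2 := Complex.mul_conj (z - a)
  have ha := Complex.mul_conj a
  have hz := Complex.mul_conj z
  have : ((Complex.normSq (1 - (starRingEnd ℂ) a * z) : ℂ)
      - Complex.normSq (z - a)) = ((1 - Complex.normSq a) : ℂ) * ((1 - Complex.normSq z) : ℂ) := by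
    rw [← h1, ← h2]
    have ha' : (Complex.normSq a : ℂ) = a * (starRingEnd ℂ) a := ha.symm
    have hz' : (Complex.normSq z : ℂ) = z * (starRingEnd ℂ) z := hz.symm
    rw [ha', hz']
    simp only [map_sub, map_mul, map_one, Complex.conj_conj]
    ring
  exact_mod_cast this

-- |fac| < 1 on the disk
lemma fac_abs_lt {a z : ℂ} (ha : Complex.abs a < 1) (hz : Complex.abs z < 1) :
    Complex.abs ((z - a) / (1 - (starRingEnd ℂ) a * z)) < 1 := by
  have hd := one_sub_ne ha hz.le
  rw [map_div₀, div_lt_one (Complex.abs.pos hd)]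
  have key := normSq_identity a z
  have hna : Complex.normSq a < 1 := by
    rw [← Complex.sq_abs]; nlinarith [Complex.abs.nonneg a]
  have hnz : Complex.normSq z < 1 := by
    rw [← Complex.sq_abs]; nlinarith [Complex.abs.nonneg z]
  have h1 : Complex.normSq (z - a) < Complex.normSq (1 - (starRingEnd ℂ) a * z) := by
    nlinarith
  have := Real.sqrt_lt_sqrt (Complex.normSq_nonneg _) h1
  simpa [Complex.abs_apply] using this
lemma fac_abs_ge {a z : ℂ} (ha : Complex.abs a < 1) (hz : 1 ≤ Complex.abs z)
    (hd : 1 - (starRingEnd ℂ) a * z ≠ 0) :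
    1 ≤ Complex.abs ((z - a) / (1 - (starRingEnd ℂ) a * z)) := by
  rw [map_div₀, le_div_iff₀ (Complex.abs.pos hd), one_mul]
  have key := normSq_identity a z
  have hna : Complex.normSq a < 1 := by
    rw [← Complex.sq_abs]; nlinarith [Complex.abs.nonneg a]
  have hnz : (1:ℝ) ≤ Complex.normSq z := by
    rw [← Complex.sq_abs]; nlinarith
  have h1 : Complex.normSq (1 - (starRingEnd ℂ) a * z) ≤ Complex.normSq (z - a) := by
    nlinarith
  have := Real.sqrt_le_sqrt h1
  simpa [Complex.abs_apply] using this

/-- numerator polynomial -/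
noncomputable def Pl (l : List ℂ) : Polynomial ℂ := (l.map fun a => X - C a).prod
/-- denominator polynomial -/
noncomputable def Ql (l : List ℂ) : Polynomial ℂ :=
  (l.map fun a => 1 - C ((starRingEnd ℂ) a) * X).prod

@[simp] lemma Pl_nil : Pl [] = 1 := rfl
@[simp] lemma Ql_nil : Ql [] = 1 := rfl
lemma Pl_cons (a : ℂ) (l : List ℂ) : Pl (a :: l) = (X - C a) * Pl l := by
  simp [Pl]
lemma Ql_cons (a : ℂ) (l : List ℂ) :
    Ql (a :: l) = (1 - C ((starRingEnd ℂ) a) * X) * Ql l := by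
  simp [Ql]

lemma blaschke_cons (ρ a : ℂ) (l : List ℂ) (z : ℂ) :
    blaschkeFun ρ (a :: l) z
      = ((z - a) / (1 - (starRingEnd ℂ) a * z)) * blaschkeFun ρ l z := by
  simp [blaschkeFun]; ring

@[simp] lemma blaschke_nil (ρ z : ℂ) : blaschkeFun ρ [] z = ρ := by simp [blaschkeFun]

lemma blaschke_single (ρ a z : ℂ) :
    blaschkeFun ρ [a] z = ρ * ((z - a) / (1 - (starRingEnd ℂ) a * z)) := by
  simp [blaschkeFun]

lemma blaschke_cons' (ρ a : ℂ) (l : List ℂ) (z : ℂ) :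
    blaschkeFun ρ (a :: l) z = blaschkeFun 1 [a] z * blaschkeFun ρ l z := by
  simp only [blaschkeFun, List.map_cons, List.prod_cons, List.map_nil, List.prod_nil]
  ring

lemma blaschke_mul (ρ₁ ρ₂ : ℂ) (l₁ l₂ : List ℂ) (z : ℂ) :
    blaschkeFun ρ₁ l₁ z * blaschkeFun ρ₂ l₂ z = blaschkeFun (ρ₁ * ρ₂) (l₁ ++ l₂) z := by
  simp [blaschkeFun]; ring

lemma Ql_eval_ne {l : List ℂ} (hl : ∀ a ∈ l, Complex.abs a < 1) {z : ℂ}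
    (hz : Complex.abs z ≤ 1) : (Ql l).eval z ≠ 0 := by
  induction l with
  | nil => simp
  | cons a t ih =>
    rw [Ql_cons]
    simp only [eval_mul, mul_ne_zero_iff]
    refine ⟨?_, ih fun x hx => hl x (List.mem_cons_of_mem _ hx)⟩
    simpa using one_sub_ne (hl a (List.mem_cons_self)) hz

lemma blaschke_eq_div {ρ : ℂ} {l : List ℂ} {z : ℂ}
    (h : ∀ a ∈ l, 1 - (starRingEnd ℂ) a * z ≠ 0) :
    blaschkeFun ρ l z = ρ * (Pl l).eval z / (Ql l).eval z := by
  induction l with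
  | nil => simp
  | cons a t ih =>
    rw [blaschke_cons, Pl_cons, Ql_cons, ih fun x hx => h x (List.mem_cons_of_mem _ hx)]
    have ha := h a (List.mem_cons_self)
    have ht : (Ql t).eval z ≠ 0 := by
      intro h0
      simp only [Ql, eval_list_prod, List.prod_eq_zero_iff, List.mem_map] at h0
      obtain ⟨_, ⟨x, hx, rfl⟩, hx0⟩ := h0
      exact h x (List.mem_cons_of_mem _ hx) (by simpa using hx0)
    simp only [eval_mul, eval_sub, eval_one, eval_X, eval_C]
    field_simp

lemma blaschke_abs_le_one {ρ : ℂ} (hρ : Complex.abs ρ = 1) {l : List ℂ}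
    (hl : ∀ a ∈ l, Complex.abs a < 1) {z : ℂ} (hz : Complex.abs z < 1) :
    Complex.abs (blaschkeFun ρ l z) ≤ 1 := by
  induction l with
  | nil => simp [hρ]
  | cons a t ih =>
    rw [blaschke_cons, map_mul]
    have h1 := fac_abs_lt (hl a (List.mem_cons_self)) hz
    have h2 := ih fun x hx => hl x (List.mem_cons_of_mem _ hx)
    nlinarith [Complex.abs.nonneg (blaschkeFun ρ t z),
      Complex.abs.nonneg ((z - a) / (1 - (starRingEnd ℂ) a * z))]

lemma blaschke_mem_disk {ρ : ℂ} (hρ : Complex.abs ρ = 1) {l : List ℂ}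
    (hl : ∀ a ∈ l, Complex.abs a < 1) (hne : l ≠ []) {z : ℂ} (hz : z ∈ unitDisk) :
    blaschkeFun ρ l z ∈ unitDisk := by
  rw [mem_unitDisk] at hz ⊢
  obtain ⟨a, t, rfl⟩ := List.exists_cons_of_ne_nil hne
  rw [blaschke_cons, map_mul]
  have h1 := fac_abs_lt (hl a (List.mem_cons_self)) hz
  have h2 := blaschke_abs_le_one hρ (fun x hx => hl x (List.mem_cons_of_mem _ hx)) hz
  nlinarith [Complex.abs.nonneg ((z - a) / (1 - (starRingEnd ℂ) a * z)),
    Complex.abs.nonneg (blaschkeFun ρ t z)]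

lemma blaschke_eq_zero_of_mem {ρ : ℂ} {l : List ℂ} {x : ℂ} (hx : x ∈ l) :
    blaschkeFun ρ l x = 0 := by
  simp only [blaschkeFun, mul_eq_zero]
  right
  rw [List.prod_eq_zero_iff, List.mem_map]
  exact ⟨x, hx, by simp⟩

lemma Ql_ne_iff {l : List ℂ} {z : ℂ} :
    (Ql l).eval z ≠ 0 ↔ ∀ a ∈ l, 1 - (starRingEnd ℂ) a * z ≠ 0 := by
  simp only [Ql, eval_list_prod, Ne, List.prod_eq_zero_iff, List.mem_map]
  constructor
  · intro h a ha h0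
    exact h ⟨_, ⟨a, ha, rfl⟩, by simpa using h0⟩
  · rintro h ⟨_, ⟨a, ha, rfl⟩, h0⟩
    exact h a ha (by simpa using h0)

lemma Pl_monic (l : List ℂ) : (Pl l).Monic := by
  induction l with
  | nil => simpa using monic_one
  | cons a t ih => rw [Pl_cons]; exact (monic_X_sub_C a).mul ih

lemma Pl_natDegree (l : List ℂ) : (Pl l).natDegree = l.length := by
  induction l with
  | nil => simp
  | cons a t ih =>
    rw [Pl_cons, (monic_X_sub_C a).natDegree_mul (Pl_monic t), natDegree_X_sub_C, ih, List.length_cons]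
    omega

lemma Ql_natDegree_le (l : List ℂ) : (Ql l).natDegree ≤ l.length := by
  induction l with
  | nil => simp
  | cons a t ih =>
    rw [Ql_cons]
    refine le_trans (natDegree_mul_le) ?_
    have h1 : (1 - C ((starRingEnd ℂ) a) * X).natDegree ≤ 1 := by
      refine le_trans (natDegree_sub_le _ _) ?_
      simpa using le_trans (natDegree_C_mul_le ((starRingEnd ℂ) a) X) natDegree_X_le
    refine le_trans (Nat.add_le_add h1 ih) (by simp [List.length_cons]; omega)

lemma Ql_coeff_top (l : List ℂ) :
    (Ql l).coeff l.length = (l.map fun a => -(starRingEnd ℂ) a).prod := by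
  induction l with
  | nil => simp
  | cons a t ih =>
    rw [Ql_cons]
    have expand : (1 - C ((starRingEnd ℂ) a) * X) * Ql t
        = Ql t - C ((starRingEnd ℂ) a) * (X * Ql t) := by ring
    rw [expand]
    have h1 : (Ql t).coeff (a :: t).length = 0 :=
      coeff_eq_zero_of_natDegree_lt (lt_of_le_of_lt (Ql_natDegree_le t) (by simp))
    have h1' : (Ql t).coeff (t.length + 1) = 0 := by simpa using h1
    simp [h1', coeff_X_mul, ih]

lemma abs_list_prod_le_one {l : List ℂ} (hl : ∀ a ∈ l, Complex.abs a < 1) :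
    Complex.abs l.prod ≤ 1 := by
  induction l with
  | nil => simp
  | cons a t ih =>
    rw [List.prod_cons, map_mul]
    have h1 := hl a (List.mem_cons_self)
    have h2 := ih fun x hx => hl x (List.mem_cons_of_mem _ hx)
    nlinarith [Complex.abs.nonneg a, Complex.abs.nonneg t.prod]

/-- the numerator polynomial of `B - w` and its top coefficient -/
lemma F_coeff_ne {ρ w : ℂ} (hρ : Complex.abs ρ = 1) (hw : Complex.abs w < 1)
    {l : List ℂ} (hl : ∀ a ∈ l, Complex.abs a < 1) :
    (C ρ * Pl l - C w * Ql l).coeff l.length ≠ 0 := by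
  have h1 : (Pl l).coeff l.length = 1 := by
    have := (Pl_monic l).leadingCoeff
    rwa [leadingCoeff, Pl_natDegree] at this
  rw [coeff_sub, coeff_C_mul, coeff_C_mul, h1, Ql_coeff_top, mul_one]
  intro h0
  have h2 : ρ = w * (l.map fun a => -(starRingEnd ℂ) a).prod := by linear_combination h0
  have h3 := congrArg Complex.abs h2
  rw [map_mul, hρ] at h3
  have h4 : Complex.abs ((l.map fun a => -(starRingEnd ℂ) a).prod) ≤ 1 := by
    apply abs_list_prod_le_one
    intro x hx
    simp only [List.mem_map] at hx
    obtain ⟨y, hy, rfl⟩ := hx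
    simpa [Complex.abs_conj] using hl y hy
  nlinarith [Complex.abs.nonneg w]

lemma F_natDegree {ρ w : ℂ} (hρ : Complex.abs ρ = 1) (hw : Complex.abs w < 1)
    {l : List ℂ} (hl : ∀ a ∈ l, Complex.abs a < 1) :
    (C ρ * Pl l - C w * Ql l).natDegree = l.length := by
  have hle : (C ρ * Pl l - C w * Ql l).natDegree ≤ l.length := by
    refine le_trans (natDegree_sub_le _ _) ?_
    refine max_le (le_trans (natDegree_C_mul_le _ _) (le_of_eq (Pl_natDegree l)))
      (le_trans (natDegree_C_mul_le _ _) (Ql_natDegree_le l))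
  exact le_antisymm hle (le_natDegree_of_ne_zero (F_coeff_ne hρ hw hl))

lemma F_ne_zero {ρ w : ℂ} (hρ : Complex.abs ρ = 1) (hw : Complex.abs w < 1)
    {l : List ℂ} (hl : ∀ a ∈ l, Complex.abs a < 1) :
    C ρ * Pl l - C w * Ql l ≠ 0 := fun h => F_coeff_ne hρ hw hl (by rw [h]; simp)

lemma Pl_eval_eq_zero_iff {l : List ℂ} {r : ℂ} : (Pl l).eval r = 0 ↔ r ∈ l := by
  simp only [Pl, eval_list_prod, List.prod_eq_zero_iff, List.mem_map]
  constructor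
  · rintro ⟨_, ⟨a, ha, rfl⟩, h0⟩
    simp only [eval_sub, eval_X, eval_C, sub_eq_zero] at h0
    exact h0 ▸ ha
  · intro h
    exact ⟨_, ⟨r, h, rfl⟩, by simp⟩

lemma blaschke_abs_ge_one {ρ : ℂ} (hρ : Complex.abs ρ = 1) {l : List ℂ}
    (hl : ∀ a ∈ l, Complex.abs a < 1) {z : ℂ} (hz : 1 ≤ Complex.abs z)
    (hd : ∀ a ∈ l, 1 - (starRingEnd ℂ) a * z ≠ 0) :
    1 ≤ Complex.abs (blaschkeFun ρ l z) := by
  induction l with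
  | nil => simp [hρ]
  | cons a t ih =>
    rw [blaschke_cons, map_mul]
    have h1 := fac_abs_ge (hl a (List.mem_cons_self)) hz (hd a (List.mem_cons_self))
    have h2 := ih (fun x hx => hl x (List.mem_cons_of_mem _ hx))
      (fun x hx => hd x (List.mem_cons_of_mem _ hx))
    nlinarith

lemma roots_mem_disk {ρ w : ℂ} (hρ : Complex.abs ρ = 1) (hw : Complex.abs w < 1)
    {l : List ℂ} (hl : ∀ a ∈ l, Complex.abs a < 1) {r : ℂ}
    (hr : (C ρ * Pl l - C w * Ql l).eval r = 0) : Complex.abs r < 1 := by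
  by_contra hge
  push_neg at hge
  simp only [eval_sub, eval_mul, eval_C] at hr
  by_cases hQ : (Ql l).eval r = 0
  · have hP : (Pl l).eval r = 0 := by
      have hρ0 : ρ ≠ 0 := fun h => by simp [h] at hρ
      have : ρ * (Pl l).eval r = 0 := by rw [sub_eq_zero] at hr; rw [hr, hQ]; ring
      exact (mul_eq_zero.1 this).resolve_left hρ0
    have := hl r (Pl_eval_eq_zero_iff.1 hP)
    linarith
  · have hd := Ql_ne_iff.1 hQ
    have hB : blaschkeFun ρ l r = w := by
      rw [blaschke_eq_div hd]
      field_simp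
      linear_combination hr
    have := blaschke_abs_ge_one hρ hl hge hd
    rw [hB] at this
    linarith

lemma F_factor {ρ w : ℂ} (hρ : Complex.abs ρ = 1) (hw : Complex.abs w < 1)
    {l : List ℂ} (hl : ∀ a ∈ l, Complex.abs a < 1) :
    ∃ (c : ℂ) (r : List ℂ), c ≠ 0 ∧ r.length = l.length ∧ (∀ x ∈ r, Complex.abs x < 1) ∧
      C ρ * Pl l - C w * Ql l = C c * Pl r := by
  set F := C ρ * Pl l - C w * Ql l with hF
  have hF0 : F ≠ 0 := F_ne_zero hρ hw hl
  have hsp : Splits F := IsAlgClosed.splits F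
  have hprod := hsp.eq_prod_roots
  refine ⟨F.leadingCoeff, F.roots.toList, ?_, ?_, ?_, ?_⟩
  · exact leadingCoeff_ne_zero.2 hF0
  · rw [Multiset.length_toList, (splits_iff_card_roots).1 hsp, F_natDegree hρ hw hl]
  · intro x hx
    rw [Multiset.mem_toList] at hx
    exact roots_mem_disk hρ hw hl ((mem_roots hF0).1 hx)
  · have hPr : Pl F.roots.toList = (Multiset.map (fun a => X - C a) F.roots).prod := by
      unfold Pl
      conv_rhs => rw [← Multiset.coe_toList F.roots]
      rw [Multiset.map_coe, Multiset.prod_coe]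
    rw [hPr]
    exact hprod

lemma Ql_eval_reflect (l : List ℂ) {z : ℂ} (hz : z ≠ 0) :
    (Ql l).eval z = z ^ l.length * (starRingEnd ℂ) ((Pl l).eval (((starRingEnd ℂ) z)⁻¹)) := by
  induction l with
  | nil => simp
  | cons a t ih =>
    rw [Ql_cons, Pl_cons]
    simp only [eval_mul, eval_sub, eval_one, eval_X, eval_C, map_mul, map_sub,
      List.length_cons, pow_succ]
    rw [ih]
    have h1 : (starRingEnd ℂ) (((starRingEnd ℂ) z)⁻¹) = z⁻¹ := by
      rw [map_inv₀, Complex.conj_conj]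
    rw [h1]
    field_simp
lemma Pl_eval_reflect (l : List ℂ) {z : ℂ} (hz : z ≠ 0) :
    (Pl l).eval z = z ^ l.length * (starRingEnd ℂ) ((Ql l).eval (((starRingEnd ℂ) z)⁻¹)) := by
  induction l with
  | nil => simp
  | cons a t ih =>
    rw [Ql_cons, Pl_cons]
    simp only [eval_mul, eval_sub, eval_one, eval_X, eval_C, map_mul, map_sub, map_one,
      List.length_cons, pow_succ]
    rw [ih]
    have h1 : (starRingEnd ℂ) (((starRingEnd ℂ) z)⁻¹) = z⁻¹ := by
      rw [map_inv₀, Complex.conj_conj]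
    rw [h1]
    field_simp
    simp only [Complex.conj_conj]
    ring

lemma reflect_identity {ρ w c : ℂ} (hρ : Complex.abs ρ = 1)
    {l r : List ℂ} (hlen : r.length = l.length)
    (hfac : C ρ * Pl l - C w * Ql l = C c * Pl r) :
    Ql l - C ((starRingEnd ℂ) w * ρ) * Pl l = C (ρ * (starRingEnd ℂ) c) * Ql r := by
  have hρρ : ρ * (starRingEnd ℂ) ρ = 1 := by
    rw [Complex.mul_conj]
    norm_cast
    rw [Complex.normSq_eq_abs, hρ]; norm_num
  have key : ∀ z : ℂ, z ≠ 0 →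
      (Ql l - C ((starRingEnd ℂ) w * ρ) * Pl l).eval z
        = (C (ρ * (starRingEnd ℂ) c) * Ql r).eval z := by
    intro z hz
    set s : ℂ := ((starRingEnd ℂ) z)⁻¹ with hs
    have hQl := Ql_eval_reflect l hz
    have hPl := Pl_eval_reflect l hz
    have hQr := Ql_eval_reflect r hz
    have hev := congrArg (eval s) hfac
    simp only [eval_sub, eval_mul, eval_C] at hev ⊢
    -- conjugate and multiply by z ^ n
    have hconj := congrArg (fun u => z ^ l.length * (starRingEnd ℂ) u) hev
    simp only [map_sub, map_mul] at hconj
    rw [mul_sub] at hconj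
    have e1 : z ^ l.length * ((starRingEnd ℂ) ρ * (starRingEnd ℂ) ((Pl l).eval s))
        = (starRingEnd ℂ) ρ * (Ql l).eval z := by rw [hQl]; ring
    have e2 : z ^ l.length * ((starRingEnd ℂ) w * (starRingEnd ℂ) ((Ql l).eval s))
        = (starRingEnd ℂ) w * (Pl l).eval z := by rw [hPl]; ring
    have e3 : z ^ l.length * ((starRingEnd ℂ) c * (starRingEnd ℂ) ((Pl r).eval s))
        = (starRingEnd ℂ) c * (Ql r).eval z := by rw [hQr, hlen]; ring
    rw [e1, e2, e3] at hconj
    -- multiply by ρ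
    have := congrArg (fun u => ρ * u) hconj
    simp only [mul_sub] at this
    calc (Ql l).eval z - (starRingEnd ℂ) w * ρ * (Pl l).eval z
        = ρ * ((starRingEnd ℂ) ρ * (Ql l).eval z) - ρ * ((starRingEnd ℂ) w * (Pl l).eval z) := by
          rw [← mul_assoc, hρρ, one_mul]; ring
      _ = ρ * ((starRingEnd ℂ) c * (Ql r).eval z) := this
      _ = ρ * (starRingEnd ℂ) c * (Ql r).eval z := by ring
  have hinf : {x : ℂ | ((Ql l - C ((starRingEnd ℂ) w * ρ) * Pl l)
      - C (ρ * (starRingEnd ℂ) c) * Ql r).IsRoot x}.Infinite := by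
    have h0 : ({x : ℂ | x ≠ 0}).Infinite := (Set.finite_singleton 0).infinite_compl
    refine h0.mono ?_
    intro x hx
    have hk := key x hx
    simp only [Set.mem_setOf_eq, IsRoot, eval_sub]
    simp only [eval_sub] at hk
    linear_combination hk
  have := eq_zero_of_infinite_isRoot _ hinf
  linear_combination this

/-- postcomposition of a Blaschke product with a disk automorphism, on the disk -/
lemma aut_comp_blaschke {ρe e ρ : ℂ} (hρe : Complex.abs ρe = 1) (he : Complex.abs e < 1)
    (hρ : Complex.abs ρ = 1) {l : List ℂ} (hl : ∀ a ∈ l, Complex.abs a < 1) :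
    ∃ (ρ' : ℂ) (l' : List ℂ), Complex.abs ρ' = 1 ∧ (∀ a ∈ l', Complex.abs a < 1) ∧
      l'.length = l.length ∧
      ∀ z ∈ unitDisk, blaschkeFun ρe [e] (blaschkeFun ρ l z) = blaschkeFun ρ' l' z := by
  obtain ⟨c, r, hc, hlen, hr, hfac⟩ := F_factor hρ he hl
  have hrefl := reflect_identity hρ hlen hfac
  have hcc : (starRingEnd ℂ) c ≠ 0 := by simpa using hc
  have hρ0 : ρ ≠ 0 := fun h => by simp [h] at hρ
  refine ⟨ρe * c / (ρ * (starRingEnd ℂ) c), r, ?_, hr, hlen, ?_⟩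
  · rw [map_div₀, map_mul, map_mul, hρe, hρ, Complex.abs_conj, one_mul]
    exact div_self (ne_of_gt (Complex.abs.pos hc))
  · intro z hz
    rw [mem_unitDisk] at hz
    have hdl : ∀ a ∈ l, 1 - (starRingEnd ℂ) a * z ≠ 0 := fun x hx => one_sub_ne (hl x hx) hz.le
    have hdr : ∀ a ∈ r, 1 - (starRingEnd ℂ) a * z ≠ 0 := fun x hx => one_sub_ne (hr x hx) hz.le
    have hQl : (Ql l).eval z ≠ 0 := Ql_eval_ne hl hz.le
    have hQr : (Ql r).eval z ≠ 0 := Ql_eval_ne hr hz.le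
    have hFz : ρ * (Pl l).eval z - e * (Ql l).eval z = c * (Pl r).eval z := by
      have := congrArg (eval z) hfac
      simpa using this
    have hDz : (Ql l).eval z - ((starRingEnd ℂ) e * ρ) * (Pl l).eval z
        = (ρ * (starRingEnd ℂ) c) * (Ql r).eval z := by
      have := congrArg (eval z) hrefl
      simpa using this
    rw [blaschke_eq_div hdl, blaschke_eq_div hdr, blaschke_single]
    have hden : 1 - (starRingEnd ℂ) e * (ρ * (Pl l).eval z / (Ql l).eval z)
        = (ρ * (starRingEnd ℂ) c) * (Ql r).eval z / (Ql l).eval z := by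
      rw [← hDz]
      field_simp
    have hnum : ρ * (Pl l).eval z / (Ql l).eval z - e = c * (Pl r).eval z / (Ql l).eval z := by
      rw [← hFz]
      field_simp
    rw [hnum, hden, div_div_div_cancel_right₀]
    · field_simp
    · exact hQl


/-- precomposition of a Blaschke product with a disk automorphism, on the disk -/
lemma blaschke_comp_aut {ρ : ℂ} (hρ : Complex.abs ρ = 1) {l : List ℂ}
    (hl : ∀ a ∈ l, Complex.abs a < 1) {ρd d : ℂ} (hρd : Complex.abs ρd = 1)
    (hd : Complex.abs d < 1) :
    ∃ (ρ' : ℂ) (l' : List ℂ), Complex.abs ρ' = 1 ∧ (∀ a ∈ l', Complex.abs a < 1) ∧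
      l'.length = l.length ∧
      ∀ z ∈ unitDisk, blaschkeFun ρ l (blaschkeFun ρd [d] z) = blaschkeFun ρ' l' z := by
  induction l with
  | nil => exact ⟨ρ, [], hρ, by simp, rfl, fun z _ => by simp⟩
  | cons a t ih =>
    obtain ⟨ρ₁, l₁, hρ₁, hl₁, hlen₁, heq₁⟩ :=
      ih fun x hx => hl x (List.mem_cons_of_mem _ hx)
    have ha : Complex.abs a < 1 := hl a (List.mem_cons_self)
    obtain ⟨ρ₂, l₂, hρ₂, hl₂, hlen₂, heq₂⟩ :=
      aut_comp_blaschke (ρe := 1) (e := a) (by simp) ha hρd (l := [d]) (by simpa using hd)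
    refine ⟨ρ₂ * ρ₁, l₂ ++ l₁, by simp [map_mul, hρ₂, hρ₁], ?_, ?_, ?_⟩
    · intro x hx
      rcases List.mem_append.1 hx with h | h
      exacts [hl₂ x h, hl₁ x h]
    · simp only [List.length_append, hlen₂, hlen₁, List.length_cons, List.length_nil]
      omega
    · intro z hz
      calc blaschkeFun ρ (a :: t) (blaschkeFun ρd [d] z)
          = blaschkeFun 1 [a] (blaschkeFun ρd [d] z)
              * blaschkeFun ρ t (blaschkeFun ρd [d] z) := blaschke_cons' _ _ _ _
        _ = blaschkeFun ρ₂ l₂ z * blaschkeFun ρ₁ l₁ z := by rw [heq₂ z hz, heq₁ z hz]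
        _ = blaschkeFun (ρ₂ * ρ₁) (l₂ ++ l₁) z := blaschke_mul _ _ _ _ _

lemma conj_mul_self_eq_one {ρ : ℂ} (hρ : Complex.abs ρ = 1) : ρ * (starRingEnd ℂ) ρ = 1 := by
  rw [Complex.mul_conj]
  norm_cast
  rw [Complex.normSq_eq_abs, hρ]; norm_num

/-- inverse of a disk automorphism -/
lemma aut_inverse {ρ d : ℂ} (hρ : Complex.abs ρ = 1) (hd : Complex.abs d < 1) :
    ∃ ρ' d' : ℂ, Complex.abs ρ' = 1 ∧ Complex.abs d' < 1 ∧
      (∀ z ∈ unitDisk, blaschkeFun ρ' [d'] (blaschkeFun ρ [d] z) = z) ∧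
      (∀ z ∈ unitDisk, blaschkeFun ρ [d] (blaschkeFun ρ' [d'] z) = z) := by
  have hρρ := conj_mul_self_eq_one hρ
  have hρ' : Complex.abs ((starRingEnd ℂ) ρ) = 1 := by rwa [Complex.abs_conj]
  have hd' : Complex.abs (-(ρ * d)) < 1 := by
    rw [AbsoluteValue.map_neg, map_mul, hρ, one_mul]; exact hd
  have key : ∀ {σ e : ℂ}, Complex.abs σ = 1 → Complex.abs e < 1 →
      ∀ z ∈ unitDisk, blaschkeFun ((starRingEnd ℂ) σ) [-(σ * e)] (blaschkeFun σ [e] z) = z := by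
    intro σ e hσ he z hz
    rw [mem_unitDisk] at hz
    have hσσ := conj_mul_self_eq_one hσ
    have h1 : 1 - (starRingEnd ℂ) e * z ≠ 0 := one_sub_ne he hz.le
    have hee : (1 : ℂ) - (starRingEnd ℂ) e * e ≠ 0 := one_sub_ne he he.le
    have hb : blaschkeFun σ [e] z = σ * ((z - e) / (1 - (starRingEnd ℂ) e * z)) :=
      blaschke_single σ e z
    have hw : Complex.abs (blaschkeFun σ [e] z) < 1 :=
      mem_unitDisk.1 (blaschke_mem_disk hσ (by simpa using he) (by simp)
        (mem_unitDisk.2 hz))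
    have h2 : 1 - (starRingEnd ℂ) (-(σ * e)) * blaschkeFun σ [e] z ≠ 0 :=
      one_sub_ne (by rw [AbsoluteValue.map_neg, map_mul, hσ, one_mul]; exact he) hw.le
    rw [blaschke_single]
    rw [hb] at h2 ⊢
    simp only [map_neg, map_mul, sub_neg_eq_add, neg_mul, sub_neg_eq_add] at h2 ⊢
    have hden : 1 + (starRingEnd ℂ) σ * (starRingEnd ℂ) e * (σ * ((z - e) / (1 - (starRingEnd ℂ) e * z)))
        = (1 - (starRingEnd ℂ) e * e) / (1 - (starRingEnd ℂ) e * z) := by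
      field_simp
      linear_combination ((starRingEnd ℂ) e * (z - e)) * hσσ
    have hnum : σ * ((z - e) / (1 - (starRingEnd ℂ) e * z)) + σ * e
        = σ * (z * (1 - (starRingEnd ℂ) e * e)) / (1 - (starRingEnd ℂ) e * z) := by
      rw [eq_div_iff h1, add_mul, mul_assoc σ, div_mul_cancel₀ _ h1]
      ring
    rw [hnum, hden, div_div_div_cancel_right₀ h1]
    field_simp
    linear_combination z * hσσ
  refine ⟨(starRingEnd ℂ) ρ, -(ρ * d), hρ', hd', key hρ hd, ?_⟩
  intro z hz
  have h2 := key hρ' hd' z hz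
  simp only [Complex.conj_conj] at h2
  have he2 : -((starRingEnd ℂ) ρ * -(ρ * d)) = d := by
    linear_combination d * hρρ
  rw [he2] at h2
  exact h2


lemma isOpen_unitDisk : IsOpen unitDisk := Metric.isOpen_ball

lemma ne_zero_of_abs_one {ρ : ℂ} (hρ : Complex.abs ρ = 1) : ρ ≠ 0 :=
  fun h => by simp [h] at hρ

lemma aut_eq_zero_iff {ρ d z : ℂ} (hρ : Complex.abs ρ = 1)
    (h1 : 1 - (starRingEnd ℂ) d * z ≠ 0) : blaschkeFun ρ [d] z = 0 ↔ z = d := by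
  rw [blaschke_single, mul_eq_zero, _root_.div_eq_zero_iff]
  constructor
  · rintro (h | h | h)
    · exact absurd h (ne_zero_of_abs_one hρ)
    · exact sub_eq_zero.1 h
    · exact absurd h h1
  · intro h
    right; left; rw [h, sub_self]

lemma aut_map_self {ρ d : ℂ} : blaschkeFun ρ [d] d = 0 := by
  rw [blaschke_single]; simp

lemma aut_hasDerivAt {ρ d z : ℂ} (h1 : 1 - (starRingEnd ℂ) d * z ≠ 0) :
    HasDerivAt (blaschkeFun ρ [d])
      (ρ * (1 - (starRingEnd ℂ) d * d) / (1 - (starRingEnd ℂ) d * z) ^ 2) z := by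
  have hfun : blaschkeFun ρ [d] = fun z => ρ * ((z - d) / (1 - (starRingEnd ℂ) d * z)) :=
    funext fun z => blaschke_single ρ d z
  rw [hfun]
  have hu : HasDerivAt (fun z : ℂ => z - d) 1 z := (hasDerivAt_id z).sub_const d
  have hv : HasDerivAt (fun z : ℂ => 1 - (starRingEnd ℂ) d * z) (-(starRingEnd ℂ) d) z := by
    simpa using ((hasDerivAt_id z).const_mul ((starRingEnd ℂ) d)).const_sub 1
  have hdiv := hu.div hv h1
  have hres := hdiv.const_mul ρ
  have heq : ρ * (1 - (starRingEnd ℂ) d * d) / (1 - (starRingEnd ℂ) d * z) ^ 2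
      = ρ * ((1 * (1 - (starRingEnd ℂ) d * z) - (z - d) * -(starRingEnd ℂ) d)
          / (1 - (starRingEnd ℂ) d * z) ^ 2) := by
    rw [mul_div_assoc]
    congr 2
    ring
  rw [heq]
  exact hres

lemma aut_deriv_ne_zero {ρ d : ℂ} (hρ : Complex.abs ρ = 1) (hd : Complex.abs d < 1)
    {z : ℂ} (h1 : 1 - (starRingEnd ℂ) d * z ≠ 0) :
    ρ * (1 - (starRingEnd ℂ) d * d) / (1 - (starRingEnd ℂ) d * z) ^ 2 ≠ 0 := by
  apply div_ne_zero
  · exact mul_ne_zero (ne_zero_of_abs_one hρ) (one_sub_ne hd hd.le)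
  · exact pow_ne_zero 2 h1

lemma deriv_eq_zero_iff {f : ℂ → ℂ} {ρe e ρd d : ℂ} (hρe : Complex.abs ρe = 1)
    (he : Complex.abs e < 1) (hρd : Complex.abs ρd = 1) (hd : Complex.abs d < 1)
    {n : ℕ} (hn : 2 ≤ n)
    (hf : Set.EqOn f ((blaschkeFun ρe [e]) ∘ (fun z => z ^ n) ∘ (blaschkeFun ρd [d])) unitDisk)
    {p : ℂ} (hp : p ∈ unitDisk) : deriv f p = 0 ↔ p = d := by
  have hp' := mem_unitDisk.1 hp
  set u := blaschkeFun ρd [d] p with hu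
  have hud : Complex.abs u < 1 :=
    mem_unitDisk.1 (blaschke_mem_disk hρd (by simpa using hd) (by simp) hp)
  have h1 : 1 - (starRingEnd ℂ) d * p ≠ 0 := one_sub_ne hd hp'.le
  have h2 : 1 - (starRingEnd ℂ) e * u ^ n ≠ 0 := by
    apply one_sub_ne he
    rw [map_pow]
    exact pow_le_one₀ (Complex.abs.nonneg u) hud.le
  have hδ : HasDerivAt (blaschkeFun ρd [d])
      (ρd * (1 - (starRingEnd ℂ) d * d) / (1 - (starRingEnd ℂ) d * p) ^ 2) p :=
    aut_hasDerivAt h1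
  have hpow : HasDerivAt (fun z : ℂ => z ^ n) ((n : ℂ) * u ^ (n - 1)) u := hasDerivAt_pow n u
  have hε : HasDerivAt (blaschkeFun ρe [e])
      (ρe * (1 - (starRingEnd ℂ) e * e) / (1 - (starRingEnd ℂ) e * u ^ n) ^ 2) (u ^ n) :=
    aut_hasDerivAt h2
  have hcomp := (hε.comp p (hpow.comp p hδ))
  have hev : f =ᶠ[nhds p] ((blaschkeFun ρe [e]) ∘ (fun z => z ^ n) ∘ (blaschkeFun ρd [d])) :=
    Filter.eventuallyEq_of_mem (isOpen_unitDisk.mem_nhds hp) hf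
  have hder : deriv f p = ρe * (1 - (starRingEnd ℂ) e * e) / (1 - (starRingEnd ℂ) e * u ^ n) ^ 2
      * ((n : ℂ) * u ^ (n - 1) * (ρd * (1 - (starRingEnd ℂ) d * d)
        / (1 - (starRingEnd ℂ) d * p) ^ 2)) := by
    rw [hev.deriv_eq]
    exact hcomp.deriv
  rw [hder]
  have hA := aut_deriv_ne_zero hρe he h2
  have hC := aut_deriv_ne_zero hρd hd h1
  have hn0 : (n : ℂ) ≠ 0 := Nat.cast_ne_zero.2 (by omega)
  rw [mul_eq_zero, mul_eq_zero, mul_eq_zero]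
  constructor
  · rintro (h | (h | h) | h)
    · exact absurd h hA
    · exact absurd h hn0
    · have hu0 : u = 0 := pow_eq_zero_iff (by omega : n - 1 ≠ 0) |>.1 h
      exact (aut_eq_zero_iff hρd h1).1 hu0
    · exact absurd h hC
  · intro h
    right; left; right
    rw [hu, h, aut_map_self]
    exact zero_pow (by omega)

lemma aut_zero_eval (ρ s : ℂ) : blaschkeFun ρ [0] s = ρ * s := by
  rw [blaschke_single]; simp

lemma blaschke_replicate_zero (ρ : ℂ) (n : ℕ) (z : ℂ) :
    blaschkeFun ρ (List.replicate n 0) z = ρ * z ^ n := by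
  simp [blaschkeFun, List.map_replicate, List.prod_replicate]

lemma order_unique_aux {φ ψ : ℂ → ℂ} {z₀ : ℂ} (hz₀ : z₀ ∈ unitDisk) {K N : ℕ}
    (hφ : ContinuousAt φ z₀) (hψ : ContinuousAt ψ z₀) (hφ0 : φ z₀ ≠ 0)
    (h : ∀ z ∈ unitDisk, (z - z₀) ^ K * φ z = (z - z₀) ^ N * ψ z) (hlt : K < N) : False := by
  have h1 : ∀ᶠ z in nhdsWithin z₀ {z₀}ᶜ, z ∈ unitDisk :=
    Filter.Eventually.filter_mono nhdsWithin_le_nhds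
      (isOpen_unitDisk.eventually_mem hz₀)
  have h2 : ∀ᶠ z in nhdsWithin z₀ {z₀}ᶜ, z ≠ z₀ := by
    filter_upwards [self_mem_nhdsWithin] with z hz using hz
  have hev : ∀ᶠ z in nhdsWithin z₀ {z₀}ᶜ, φ z = (z - z₀) ^ (N - K) * ψ z := by
    filter_upwards [h1, h2] with z hz hzne
    have hzz := h z hz
    have hk : (z - z₀) ≠ 0 := sub_ne_zero.2 hzne
    have hN : (z - z₀) ^ N = (z - z₀) ^ K * (z - z₀) ^ (N - K) := by
      rw [← pow_add]; congr 1; omega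
    rw [hN, mul_assoc] at hzz
    exact mul_left_cancel₀ (pow_ne_zero K hk) hzz
  have lim1 : Filter.Tendsto φ (nhdsWithin z₀ {z₀}ᶜ) (nhds (φ z₀)) :=
    hφ.continuousWithinAt (s := {z₀}ᶜ)
  have lim2 : Filter.Tendsto (fun z => (z - z₀) ^ (N - K) * ψ z)
      (nhdsWithin z₀ {z₀}ᶜ) (nhds 0) := by
    have hc : ContinuousAt (fun z => (z - z₀) ^ (N - K) * ψ z) z₀ :=
      ((continuousAt_id.sub continuousAt_const).pow _).mul hψ
    have h3 : Filter.Tendsto (fun z => (z - z₀) ^ (N - K) * ψ z) (nhdsWithin z₀ {z₀}ᶜ)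
        (nhds ((z₀ - z₀) ^ (N - K) * ψ z₀)) := hc.continuousWithinAt (s := {z₀}ᶜ)
    simpa [sub_self, zero_pow (Nat.sub_ne_zero_of_lt hlt)] using h3
  have : φ z₀ = 0 := tendsto_nhds_unique (lim1.congr' hev) lim2
  exact hφ0 this

lemma order_unique {φ ψ : ℂ → ℂ} {z₀ : ℂ} (hz₀ : z₀ ∈ unitDisk) {K N : ℕ}
    (hφ : ContinuousAt φ z₀) (hψ : ContinuousAt ψ z₀) (hφ0 : φ z₀ ≠ 0) (hψ0 : ψ z₀ ≠ 0)
    (h : ∀ z ∈ unitDisk, (z - z₀) ^ K * φ z = (z - z₀) ^ N * ψ z) : K = N := by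
  rcases lt_trichotomy K N with hlt | heq | hgt
  · exact absurd (order_unique_aux hz₀ hφ hψ hφ0 h hlt) id
  · exact heq
  · exact absurd (order_unique_aux hz₀ hψ hφ hψ0 (fun z hz => (h z hz).symm) hgt) id

/-- If a Blaschke product of degree `n` takes the value `w` in the disk only at `z₀`,
then it is `ε ∘ z^n ∘ (z - z₀)/(1 - conj z₀ z)`. -/
lemma TR_construct {f : ℂ → ℂ} {ρ : ℂ} {l : List ℂ} {n : ℕ} (hn : 1 ≤ n)
    (hρ : Complex.abs ρ = 1) (hl : ∀ a ∈ l, Complex.abs a < 1) (hlen : l.length = n)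
    (hf : ∀ z, f z = blaschkeFun ρ l z)
    {z₀ w : ℂ} (hz₀ : z₀ ∈ unitDisk) (hw : w ∈ unitDisk)
    (huniq : ∀ u ∈ unitDisk, f u = w → u = z₀) :
    ∃ ρe e : ℂ, Complex.abs ρe = 1 ∧ Complex.abs e < 1 ∧
      Set.EqOn f ((blaschkeFun ρe [e]) ∘ (fun z => z ^ n) ∘ (blaschkeFun 1 [z₀])) unitDisk := by
  have hz₀' := mem_unitDisk.1 hz₀
  have hw' := mem_unitDisk.1 hw
  have hlne : l ≠ [] := by
    intro h; rw [h] at hlen; simp at hlen; omega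
  have hmaps : ∀ u ∈ unitDisk, f u ∈ unitDisk := by
    intro u hu; rw [hf]; exact blaschke_mem_disk hρ hl hlne hu
  -- inverse of δB := blaschkeFun 1 [z₀]
  obtain ⟨σ, d', hσ, hd', hηδ, hδη⟩ := aut_inverse (ρ := 1) (d := z₀) (by simp) hz₀'
  -- inverse of ε₀ := blaschkeFun 1 [w]
  obtain ⟨τ, e', hτ, he', hηε, hεη⟩ := aut_inverse (ρ := 1) (d := w) (by simp) hw'
  -- f ∘ ηB
  obtain ⟨ρ₁, l₁, hρ₁, hl₁, hlen₁, heq₁⟩ := blaschke_comp_aut hρ hl hσ hd'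
  -- ε₀ ∘ (f ∘ ηB)
  obtain ⟨ρ₂, l₂, hρ₂, hl₂, hlen₂, heq₂⟩ :=
    aut_comp_blaschke (ρe := 1) (e := w) (by simp) hw' hρ₁ hl₁
  -- every entry of l₂ is 0
  have hent : ∀ x ∈ l₂, x = 0 := by
    intro x hx
    have hxd : x ∈ unitDisk := mem_unitDisk.2 (hl₂ x hx)
    have h0 : blaschkeFun ρ₂ l₂ x = 0 := blaschke_eq_zero_of_mem hx
    have h1 : blaschkeFun 1 [w] (blaschkeFun ρ₁ l₁ x) = 0 := by rw [heq₂ x hxd, h0]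
    have h2 : blaschkeFun ρ₁ l₁ x = f (blaschkeFun σ [d'] x) := by
      rw [← heq₁ x hxd, hf]
    have hηx : blaschkeFun σ [d'] x ∈ unitDisk :=
      blaschke_mem_disk hσ (by simpa using hd') (by simp) hxd
    have hfη : f (blaschkeFun σ [d'] x) ∈ unitDisk := hmaps _ hηx
    have h3 : f (blaschkeFun σ [d'] x) = w := by
      rw [h2] at h1
      exact (aut_eq_zero_iff (z := f (blaschkeFun σ [d'] x)) (by simp)
        (one_sub_ne hw' (mem_unitDisk.1 hfη).le)).1 h1
    have h4 : blaschkeFun σ [d'] x = z₀ := huniq _ hηx h3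
    have h5 := hδη x hxd
    rw [h4] at h5
    rw [← h5, aut_map_self]
  have hrep : l₂ = List.replicate n 0 := by
    rw [List.eq_replicate_iff]
    exact ⟨by rw [hlen₂, hlen₁, hlen], hent⟩
  -- the final outer automorphism: η₀ ∘ (ρ₂ • ·)
  obtain ⟨ρ₃, l₃, hρ₃, hl₃, hlen₃, heq₃⟩ :=
    aut_comp_blaschke (ρe := τ) (e := e') hτ he' (ρ := ρ₂) hρ₂ (l := [0]) (by simp)
  obtain ⟨e₃, rfl⟩ := List.length_eq_one_iff.1 (by simpa using hlen₃)
  refine ⟨ρ₃, e₃, hρ₃, by simpa using hl₃ e₃ (by simp), ?_⟩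
  intro z hz
  have hδz : blaschkeFun 1 [z₀] z ∈ unitDisk :=
    blaschke_mem_disk (by simp) (by simpa using hz₀') (by simp) hz
  have htn : (blaschkeFun 1 [z₀] z) ^ n ∈ unitDisk := by
    rw [mem_unitDisk, map_pow]
    exact pow_lt_one₀ (Complex.abs.nonneg _) (mem_unitDisk.1 hδz) (by omega)
  have e1 : blaschkeFun 1 [w] (f z) = ρ₂ * (blaschkeFun 1 [z₀] z) ^ n := by
    have s2 := heq₂ (blaschkeFun 1 [z₀] z) hδz
    have s1 := heq₁ (blaschkeFun 1 [z₀] z) hδz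
    rw [hηδ z hz] at s1
    rw [← s1, ← hf] at s2
    rw [s2, hrep, blaschke_replicate_zero]
  have e2 : blaschkeFun τ [e'] (blaschkeFun 1 [w] (f z)) = f z := hηε (f z) (hmaps z hz)
  have e3 : f z = blaschkeFun τ [e'] (blaschkeFun ρ₂ [0] ((blaschkeFun 1 [z₀] z) ^ n)) := by
    rw [aut_zero_eval, ← e1, e2]
  rw [Function.comp_apply, Function.comp_apply, e3]
  exact heq₃ _ htn

lemma forward_core {a b : ℂ → ℂ} {na nb : ℕ} (hna : 2 ≤ na) (hnb : 2 ≤ nb)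
    {ρa : ℂ} {la : List ℂ} (hρa : Complex.abs ρa = 1) (hla : ∀ x ∈ la, Complex.abs x < 1)
    (hlena : la.length = na) (hfa : ∀ z, a z = blaschkeFun ρa la z)
    {ρb : ℂ} {lb : List ℂ} (hρb : Complex.abs ρb = 1) (hlb : ∀ x ∈ lb, Complex.abs x < 1)
    (hlenb : lb.length = nb) (hfb : ∀ z, b z = blaschkeFun ρb lb z)
    {ρe e ρd d : ℂ} (hρe : Complex.abs ρe = 1) (he : Complex.abs e < 1)
    (hρd : Complex.abs ρd = 1) (hd : Complex.abs d < 1)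
    (htr : ∀ z ∈ unitDisk, a (b z)
      = blaschkeFun ρe [e] ((blaschkeFun ρd [d] z) ^ (na * nb))) :
    (∀ u ∈ unitDisk, b u = b d → u = d) ∧
      (∀ u ∈ unitDisk, a u = a (b d) → u = b d) := by
  set N := na * nb with hN
  have hN1 : 1 ≤ N := Nat.mul_pos (by omega) (by omega)
  have hdm : d ∈ unitDisk := mem_unitDisk.2 hd
  have hlbne : lb ≠ [] := by intro h; rw [h] at hlenb; simp at hlenb; omega
  have hlane : la ≠ [] := by intro h; rw [h] at hlena; simp at hlena; omega
  have hbmaps : ∀ u ∈ unitDisk, b u ∈ unitDisk := by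
    intro u hu; rw [hfb]; exact blaschke_mem_disk hρb hlb hlbne hu
  set w := b d with hwdef
  have hwm : w ∈ unitDisk := hbmaps d hdm
  have hw : Complex.abs w < 1 := mem_unitDisk.1 hwm
  set v := a w with hvdef
  -- rational representations
  have hbr : ∀ z ∈ unitDisk, b z = ρb * (Pl lb).eval z / (Ql lb).eval z := by
    intro z hz
    rw [hfb]
    exact blaschke_eq_div fun x hx => one_sub_ne (hlb x hx) (mem_unitDisk.1 hz).le
  have har : ∀ z ∈ unitDisk, a z = ρa * (Pl la).eval z / (Ql la).eval z := by
    intro z hz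
    rw [hfa]
    exact blaschke_eq_div fun x hx => one_sub_ne (hla x hx) (mem_unitDisk.1 hz).le
  have hQb : ∀ z ∈ unitDisk, (Ql lb).eval z ≠ 0 :=
    fun z hz => Ql_eval_ne hlb (mem_unitDisk.1 hz).le
  have hQa : ∀ z ∈ unitDisk, (Ql la).eval z ≠ 0 :=
    fun z hz => Ql_eval_ne hla (mem_unitDisk.1 hz).le
  -- numerator polynomials
  set Fb := C ρb * Pl lb - C w * Ql lb with hFbdef
  set Fa := C ρa * Pl la - C v * Ql la with hFadef
  have hva : Complex.abs v < 1 := by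
    rw [hvdef, hfa]
    exact mem_unitDisk.1 (blaschke_mem_disk hρa hla hlane hwm)
  have hFb0 : Fb ≠ 0 := F_ne_zero hρb hw hlb
  have hFa0 : Fa ≠ 0 := F_ne_zero hρa hva hla
  have hFbdeg : Fb.natDegree = nb := by rw [hFbdef, F_natDegree hρb hw hlb, hlenb]
  have hFadeg : Fa.natDegree = na := by rw [hFadef, F_natDegree hρa hva hla, hlena]
  set k := Fb.rootMultiplicity d with hkdef
  set m := Fa.rootMultiplicity w with hmdef
  obtain ⟨G, hGe, hGd⟩ := Fb.exists_eq_pow_rootMultiplicity_mul_and_not_dvd hFb0 d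
  obtain ⟨H, hHe, hHd⟩ := Fa.exists_eq_pow_rootMultiplicity_mul_and_not_dvd hFa0 w
  have hGd0 : G.eval d ≠ 0 := fun h => hGd (dvd_iff_isRoot.2 h)
  have hHw0 : H.eval w ≠ 0 := fun h => hHd (dvd_iff_isRoot.2 h)
  -- values of b - w and a - v
  have hsubb : ∀ z ∈ unitDisk, b z - w = (z - d) ^ k * G.eval z / (Ql lb).eval z := by
    intro z hz
    have h1 := hQb z hz
    have h2 : Fb.eval z = (z - d) ^ k * G.eval z := by
      conv_lhs => rw [hGe]
      simp [eval_mul, eval_pow, hkdef]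
    have h3 : Fb.eval z = ρb * (Pl lb).eval z - w * (Ql lb).eval z := by
      simp [hFbdef]
    rw [hbr z hz, ← h2, h3]
    field_simp
  have hsuba : ∀ u ∈ unitDisk, a u - v = (u - w) ^ m * H.eval u / (Ql la).eval u := by
    intro u hu
    have h1 := hQa u hu
    have h2 : Fa.eval u = (u - w) ^ m * H.eval u := by
      conv_lhs => rw [hHe]
      simp [eval_mul, eval_pow, hmdef]
    have h3 : Fa.eval u = ρa * (Pl la).eval u - v * (Ql la).eval u := by
      simp [hFadef]
    rw [har u hu, ← h2, h3]
    field_simp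
  -- root multiplicities are positive
  have hk1 : 1 ≤ k := by
    rw [hkdef]
    refine (rootMultiplicity_pos hFb0).2 ?_
    have h3 : Fb.eval d = ρb * (Pl lb).eval d - w * (Ql lb).eval d := by simp [hFbdef]
    have h4 : b d = ρb * (Pl lb).eval d / (Ql lb).eval d := hbr d hdm
    rw [IsRoot, h3, hwdef, h4, div_mul_cancel₀ _ (hQb d hdm), sub_self]
  have hm1 : 1 ≤ m := by
    rw [hmdef]
    refine (rootMultiplicity_pos hFa0).2 ?_
    have h3 : Fa.eval w = ρa * (Pl la).eval w - v * (Ql la).eval w := by simp [hFadef]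
    have h4 : a w = ρa * (Pl la).eval w / (Ql la).eval w := har w hwm
    rw [IsRoot, h3, hvdef, h4, div_mul_cancel₀ _ (hQa w hwm), sub_self]
  have hkle : k ≤ nb := by
    have hdvd : (X - C d) ^ k ∣ Fb := Dvd.intro _ hGe.symm
    have := natDegree_le_of_dvd hdvd hFb0
    rwa [natDegree_pow, natDegree_X_sub_C, mul_one, hFbdeg] at this
  have hmle : m ≤ na := by
    have hdvd : (X - C w) ^ m ∣ Fa := Dvd.intro _ hHe.symm
    have := natDegree_le_of_dvd hdvd hFa0
    rwa [natDegree_pow, natDegree_X_sub_C, mul_one, hFadeg] at this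
  -- the two local factorizations of a ∘ b - v
  set br : ℂ → ℂ := fun z => ρb * (Pl lb).eval z / (Ql lb).eval z with hbrdef
  set φ : ℂ → ℂ := fun z => (G.eval z / (Ql lb).eval z) ^ m
      * (H.eval (br z) / (Ql la).eval (br z)) with hφdef
  set ψ : ℂ → ℂ := fun z => ρe * (1 - (starRingEnd ℂ) e * e)
      * (ρd / (1 - (starRingEnd ℂ) d * z)) ^ N
      / (1 - (starRingEnd ℂ) e * (ρd * ((z - d) / (1 - (starRingEnd ℂ) d * z))) ^ N)
    with hψdef
  have hbrw : br d = w := by rw [hbrdef]; exact (hbr d hdm).symm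
  have hveq : v = blaschkeFun ρe [e] 0 := by
    have h1 := htr d hdm
    rw [aut_map_self, zero_pow (by omega : N ≠ 0)] at h1
    rw [hvdef, hwdef, h1]
  have key : ∀ z ∈ unitDisk, (z - d) ^ (k * m) * φ z = (z - d) ^ N * ψ z := by
    intro z hz
    have hz' := mem_unitDisk.1 hz
    have hbz : b z ∈ unitDisk := hbmaps z hz
    have h1 : 1 - (starRingEnd ℂ) d * z ≠ 0 := one_sub_ne hd hz'.le
    -- left side equals a (b z) - v
    have hL : a (b z) - v = (z - d) ^ (k * m) * φ z := by
      rw [hsuba (b z) hbz, hsubb z hz]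
      have hbz' : b z = br z := hbr z hz
      rw [hbz', hφdef]
      have hexp : ((z - d) ^ k * G.eval z / (Ql lb).eval z) ^ m
          = (z - d) ^ (k * m) * (G.eval z / (Ql lb).eval z) ^ m := by
        rw [mul_div_assoc, mul_pow, ← pow_mul]
      rw [hexp]
      ring
    -- right side equals a (b z) - v
    have hδz : blaschkeFun ρd [d] z ∈ unitDisk :=
      blaschke_mem_disk hρd (by simpa using hd) (by simp) hz
    have hun : Complex.abs ((blaschkeFun ρd [d] z) ^ N) ≤ 1 := by
      rw [map_pow]
      exact pow_le_one₀ (Complex.abs.nonneg _) (mem_unitDisk.1 hδz).le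
    have hden : 1 - (starRingEnd ℂ) e * (blaschkeFun ρd [d] z) ^ N ≠ 0 :=
      one_sub_ne he hun
    have hden' : 1 - (starRingEnd ℂ) e * (ρd * ((z - d) / (1 - (starRingEnd ℂ) d * z))) ^ N ≠ 0 := by
      have : blaschkeFun ρd [d] z = ρd * ((z - d) / (1 - (starRingEnd ℂ) d * z)) :=
        blaschke_single _ _ _
      rwa [this] at hden
    have hR : a (b z) - v = (z - d) ^ N * ψ z := by
      rw [htr z hz, hveq, blaschke_single, blaschke_single, blaschke_single, hψdef]
      have hu2 : (ρd * ((z - d) / (1 - (starRingEnd ℂ) d * z))) ^ N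
          = ρd ^ N * (z - d) ^ N / (1 - (starRingEnd ℂ) d * z) ^ N := by
        rw [mul_pow, div_pow, mul_div_assoc]
      have hBN : (1 - (starRingEnd ℂ) d * z) ^ N ≠ 0 := pow_ne_zero _ h1
      have hden'' : 1 - (starRingEnd ℂ) e
          * (ρd ^ N * (z - d) ^ N / (1 - (starRingEnd ℂ) d * z) ^ N) ≠ 0 := by
        rw [← hu2]; exact hden'
      have hDen2 : (1 - (starRingEnd ℂ) d * z) ^ N
          - (starRingEnd ℂ) e * (ρd ^ N * (z - d) ^ N) ≠ 0 := by
        intro h0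
        apply hden''
        have hsplit : 1 - (starRingEnd ℂ) e
            * (ρd ^ N * (z - d) ^ N / (1 - (starRingEnd ℂ) d * z) ^ N)
            = ((1 - (starRingEnd ℂ) d * z) ^ N
              - (starRingEnd ℂ) e * (ρd ^ N * (z - d) ^ N)) / (1 - (starRingEnd ℂ) d * z) ^ N := by
          rw [mul_div_assoc', one_sub_div hBN]
        rw [hsplit, h0, zero_div]
      simp only [hu2]
      rw [div_pow, mul_div_assoc' ((starRingEnd ℂ) e), one_sub_div hBN]
      generalize (1 - (starRingEnd ℂ) d * z) ^ N = Bn at hBN hDen2 ⊢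
      simp only [div_div_eq_mul_div]
      field_simp
      linear_combination (-(ρe * e)) * mul_inv_cancel₀ hDen2
    rw [← hL, hR]
  -- continuity and nonvanishing at d
  have hQbd : (Ql lb).eval d ≠ 0 := hQb d hdm
  have hQaw : (Ql la).eval (br d) ≠ 0 := by rw [hbrw]; exact hQa w hwm
  have hbrc : ContinuousAt br d := by
    apply ContinuousAt.div
    · exact (continuous_const.mul (Pl lb).continuous).continuousAt
    · exact (Ql lb).continuous.continuousAt
    · exact hQbd
  have hφc : ContinuousAt φ d := by
    apply ContinuousAt.mul
    · exact (ContinuousAt.div G.continuous.continuousAt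
        (Ql lb).continuous.continuousAt hQbd).pow m
    · exact ContinuousAt.div (H.continuous.continuousAt.comp hbrc)
        ((Ql la).continuous.continuousAt.comp hbrc) hQaw
  have hφ0 : φ d ≠ 0 := by
    rw [hφdef]
    refine mul_ne_zero (pow_ne_zero _ (div_ne_zero hGd0 hQbd)) (div_ne_zero ?_ hQaw)
    rw [hbrw]; exact hHw0
  have hdd : 1 - (starRingEnd ℂ) d * d ≠ 0 := one_sub_ne hd hd.le
  have hψc : ContinuousAt ψ d := by
    apply ContinuousAt.div
    · apply ContinuousAt.mul continuousAt_const
      exact (ContinuousAt.div continuousAt_const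
        (continuous_const.sub (continuous_const.mul continuous_id)).continuousAt hdd).pow N
    · apply ContinuousAt.sub continuousAt_const
      apply ContinuousAt.mul continuousAt_const
      apply ContinuousAt.pow
      apply ContinuousAt.mul continuousAt_const
      exact ContinuousAt.div (continuous_id.sub continuous_const).continuousAt
        (continuous_const.sub (continuous_const.mul continuous_id)).continuousAt hdd
    · simp [zero_pow (by omega : N ≠ 0)]
  have hψ0 : ψ d ≠ 0 := by
    rw [hψdef]
    simp only [sub_self, zero_div, mul_zero, zero_pow (by omega : N ≠ 0), sub_zero, div_one]
    exact mul_ne_zero (mul_ne_zero (ne_zero_of_abs_one hρe) (one_sub_ne he he.le))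
      (pow_ne_zero _ (div_ne_zero (ne_zero_of_abs_one hρd) hdd))
  have hkm : k * m = N := order_unique hdm hφc hψc hφ0 hψ0 key
  -- conclude k = nb, m = na
  have hkeq : k = nb := by
    have h1 : nb * na ≤ k * na := by
      calc nb * na = k * m := by rw [hkm, hN]; ring
      _ ≤ k * na := Nat.mul_le_mul_left k hmle
    have h2 : nb ≤ k := Nat.le_of_mul_le_mul_right h1 (by omega)
    omega
  have hmeq : m = na := by
    have : k * m = k * na := by rw [hkm, hkeq, hN]; ring
    exact Nat.eq_of_mul_eq_mul_left (by omega) this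
  -- G and H are nonzero constants
  have hGconst : ∃ c : ℂ, c ≠ 0 ∧ G = C c := by
    have hG0 : G ≠ 0 := fun h => hGd0 (by rw [h]; simp)
    have hdeg : Fb.natDegree = k + G.natDegree := by
      rw [hGe, natDegree_mul (pow_ne_zero _ (X_sub_C_ne_zero d)) hG0,
        natDegree_pow, natDegree_X_sub_C, mul_one]
    rw [hFbdeg, hkeq] at hdeg
    have : G.natDegree = 0 := by omega
    obtain ⟨c, hc⟩ := natDegree_eq_zero.1 this
    exact ⟨c, fun h => hG0 (by rw [← hc, h, map_zero]), hc.symm⟩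
  have hHconst : ∃ c : ℂ, c ≠ 0 ∧ H = C c := by
    have hH0 : H ≠ 0 := fun h => hHw0 (by rw [h]; simp)
    have hdeg : Fa.natDegree = m + H.natDegree := by
      rw [hHe, natDegree_mul (pow_ne_zero _ (X_sub_C_ne_zero w)) hH0,
        natDegree_pow, natDegree_X_sub_C, mul_one]
    rw [hFadeg, hmeq] at hdeg
    have : H.natDegree = 0 := by omega
    obtain ⟨c, hc⟩ := natDegree_eq_zero.1 this
    exact ⟨c, fun h => hH0 (by rw [← hc, h, map_zero]), hc.symm⟩
  obtain ⟨cb, hcb0, hcb⟩ := hGconst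
  obtain ⟨ca, hca0, hca⟩ := hHconst
  constructor
  · intro u hu hbu
    have := hsubb u hu
    rw [hbu, sub_self, hcb] at this
    have h0 : (u - d) ^ k * cb = 0 := by
      have h1 := this.symm
      rw [div_eq_iff (hQb u hu)] at h1
      simpa using h1
    have h2 : (u - d) ^ k = 0 := by
      rcases mul_eq_zero.1 h0 with h | h
      · exact h
      · exact absurd h hcb0
    have := pow_eq_zero_iff (by omega : k ≠ 0) |>.1 h2
    exact sub_eq_zero.1 this
  · intro u hu hau
    have := hsuba u hu
    rw [hau, sub_self, hca] at this
    have h0 : (u - w) ^ m * ca = 0 := by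
      have h1 := this.symm
      rw [div_eq_iff (hQa u hu)] at h1
      simpa using h1
    have h2 : (u - w) ^ m = 0 := by
      rcases mul_eq_zero.1 h0 with h | h
      · exact h
      · exact absurd h hca0
    have := pow_eq_zero_iff (by omega : m ≠ 0) |>.1 h2
    exact sub_eq_zero.1 this

lemma aut_data {f : ℂ → ℂ} (h : IsDiskAut f) :
    ∃ ρ e : ℂ, Complex.abs ρ = 1 ∧ Complex.abs e < 1 ∧ ∀ z, f z = blaschkeFun ρ [e] z := by
  obtain ⟨ρ, l, hρ, hl, hlen, hf⟩ := h
  obtain ⟨x, rfl⟩ := List.length_eq_one_iff.1 hlen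
  exact ⟨ρ, x, hρ, hl x (by simp), hf⟩

lemma zero_mem_disk : (0 : ℂ) ∈ unitDisk := by rw [mem_unitDisk]; simp

lemma pow_mem_disk {t : ℂ} (ht : t ∈ unitDisk) {n : ℕ} (hn : 1 ≤ n) : t ^ n ∈ unitDisk := by
  rw [mem_unitDisk, map_pow]
  exact pow_lt_one₀ (Complex.abs.nonneg _) (mem_unitDisk.1 ht) (by omega)

end BP


end

open BP

/-- For nonlinear finite Blaschke products `a` (degree `na ≥ 2`)
and `b` (degree `nb ≥ 2`), the composition `a ∘ b` is totally ramified iff both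
`a` and `b` are totally ramified and the unique critical point of `a` in the
disk equals the unique critical value of `b` (encoded: every critical point `p`
of `a` in the disk equals `b z` for every critical point `z` of `b` in the
disk). -/
theorem stmt_10 (a b : ℂ → ℂ) (na nb : ℕ) (hna : 2 ≤ na) (hnb : 2 ≤ nb)
    (ha : IsBlaschke na a) (hb : IsBlaschke nb b) :
    IsTotallyRamified (na * nb) (a ∘ b) ↔
      (IsTotallyRamified na a ∧ IsTotallyRamified nb b ∧
        ∀ p z : ℂ, p ∈ unitDisk → z ∈ unitDisk →
          deriv a p = 0 → deriv b z = 0 → p = b z) := by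

  obtain ⟨ρa, la, hρa, hla, hlena, hfa⟩ := ha
  obtain ⟨ρb, lb, hρb, hlb, hlenb, hfb⟩ := hb
  have hlbne : lb ≠ [] := by intro h; rw [h] at hlenb; simp at hlenb; omega
  have hlane : la ≠ [] := by intro h; rw [h] at hlena; simp at hlena; omega
  have hbmaps : ∀ u ∈ unitDisk, b u ∈ unitDisk := by
    intro u hu; rw [hfb]; exact blaschke_mem_disk hρb hlb hlbne hu
  have hamaps : ∀ u ∈ unitDisk, a u ∈ unitDisk := by
    intro u hu; rw [hfa]; exact blaschke_mem_disk hρa hla hlane hu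
  constructor
  · rintro ⟨ε, δ, hεaut, hδaut, heq⟩
    obtain ⟨ρe, e, hρe, he, hfe⟩ := aut_data hεaut
    obtain ⟨ρd, d, hρd, hd, hfd⟩ := aut_data hδaut
    have hdm : d ∈ unitDisk := mem_unitDisk.2 hd
    have htr : ∀ z ∈ unitDisk, a (b z)
        = blaschkeFun ρe [e] ((blaschkeFun ρd [d] z) ^ (na * nb)) := by
      intro z hz
      have h := heq hz
      simp only [Function.comp_apply] at h
      rw [h, hfe, hfd]
    obtain ⟨huB, huA⟩ := forward_core hna hnb hρa hla hlena hfa hρb hlb hlenb hfb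
      hρe he hρd hd htr
    have hwm : b d ∈ unitDisk := hbmaps d hdm
    have hw : Complex.abs (b d) < 1 := mem_unitDisk.1 hwm
    have hvm : a (b d) ∈ unitDisk := hamaps _ hwm
    obtain ⟨σb, eb, hσb, heb, hEqb⟩ := TR_construct (by omega : 1 ≤ nb) hρb hlb hlenb hfb
      hdm hwm huB
    obtain ⟨σa, ea, hσa, hea, hEqa⟩ := TR_construct (by omega : 1 ≤ na) hρa hla hlena hfa
      hwm hvm huA
    refine ⟨⟨blaschkeFun σa [ea], blaschkeFun 1 [b d],
        ⟨σa, [ea], hσa, by simp; exact hea, rfl, fun _ => rfl⟩,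
        ⟨1, [b d], by simp, by simp; exact hw, rfl, fun _ => rfl⟩, hEqa⟩,
      ⟨blaschkeFun σb [eb], blaschkeFun 1 [d],
        ⟨σb, [eb], hσb, by simp; exact heb, rfl, fun _ => rfl⟩,
        ⟨1, [d], by simp, by simp; exact hd, rfl, fun _ => rfl⟩, hEqb⟩, ?_⟩
    intro p z hp hz hdap hdbz
    have hpa : p = b d :=
      (deriv_eq_zero_iff hσa hea (by simp) hw hna hEqa hp).1 hdap
    have hzb : z = d :=
      (deriv_eq_zero_iff hσb heb (by simp) hd hnb hEqb hz).1 hdbz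
    rw [hpa, hzb]
  · rintro ⟨⟨εa, δa, hεaAut, hδaAut, heqa⟩, ⟨εb, δb, hεbAut, hδbAut, heqb⟩, hcrit⟩
    obtain ⟨ρ1, e1, hρ1, he1, hf1⟩ := aut_data hεaAut
    obtain ⟨ρ2, d2, hρ2, hd2, hf2⟩ := aut_data hδaAut
    obtain ⟨ρ3, e3, hρ3, he3, hf3⟩ := aut_data hεbAut
    obtain ⟨ρ4, d4, hρ4, hd4, hf4⟩ := aut_data hδbAut
    have hd2m : d2 ∈ unitDisk := mem_unitDisk.2 hd2
    have hd4m : d4 ∈ unitDisk := mem_unitDisk.2 hd4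
    have heqa' : Set.EqOn a ((blaschkeFun ρ1 [e1]) ∘ (fun z => z ^ na)
        ∘ (blaschkeFun ρ2 [d2])) unitDisk := by
      intro z hz
      have h := heqa hz
      simp only [Function.comp_apply] at h ⊢
      rw [h, hf1, hf2]
    have heqb' : Set.EqOn b ((blaschkeFun ρ3 [e3]) ∘ (fun z => z ^ nb)
        ∘ (blaschkeFun ρ4 [d4])) unitDisk := by
      intro z hz
      have h := heqb hz
      simp only [Function.comp_apply] at h ⊢
      rw [h, hf3, hf4]
    have hderiva : deriv a d2 = 0 :=
      (deriv_eq_zero_iff hρ1 he1 hρ2 hd2 hna heqa' hd2m).2 rfl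
    have hderivb : deriv b d4 = 0 :=
      (deriv_eq_zero_iff hρ3 he3 hρ4 hd4 hnb heqb' hd4m).2 rfl
    have hp : d2 = b d4 := hcrit d2 d4 hd2m hd4m hderiva hderivb
    have hbd4 : b d4 = blaschkeFun ρ3 [e3] 0 := by
      have h := heqb' hd4m
      simp only [Function.comp_apply] at h
      rw [aut_map_self, zero_pow (by omega : nb ≠ 0)] at h
      exact h
    obtain ⟨ρμ, lμ, hρμ, hlμ, hlenμ, heqμ⟩ :=
      aut_comp_blaschke (ρe := ρ2) (e := d2) hρ2 hd2 (ρ := ρ3) hρ3 (l := [e3])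
        (by simpa using he3)
    obtain ⟨cμ, rfl⟩ := List.length_eq_one_iff.1 (by simpa using hlenμ)
    have hc0 : (0 : ℂ) = cμ := by
      have h0 := heqμ 0 zero_mem_disk
      have hL : blaschkeFun ρ2 [d2] (blaschkeFun ρ3 [e3] 0) = 0 := by
        rw [← hbd4, ← hp, aut_map_self]
      rw [hL] at h0
      exact (aut_eq_zero_iff hρμ (by simp)).1 h0.symm
    have hμρ : ∀ u ∈ unitDisk, blaschkeFun ρ2 [d2] (blaschkeFun ρ3 [e3] u) = ρμ * u := by
      intro u hu
      rw [heqμ u hu, ← hc0, aut_zero_eval]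
    obtain ⟨ρ5, l5, hρ5, hl5, hlen5, heq5⟩ :=
      aut_comp_blaschke (ρe := ρ1) (e := e1) hρ1 he1 (ρ := ρμ ^ na)
        (by rw [map_pow, hρμ, one_pow]) (l := [0]) (by simp)
    obtain ⟨e5, rfl⟩ := List.length_eq_one_iff.1 (by simpa using hlen5)
    refine ⟨blaschkeFun ρ5 [e5], δb,
      ⟨ρ5, [e5], hρ5, by simp; exact hl5 e5 (by simp), rfl, fun _ => rfl⟩, hδbAut, ?_⟩
    intro z hz
    have hT : blaschkeFun ρ4 [d4] z ∈ unitDisk :=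
      blaschke_mem_disk hρ4 (by simpa using hd4) (by simp) hz
    have hu : (blaschkeFun ρ4 [d4] z) ^ nb ∈ unitDisk := pow_mem_disk hT (by omega)
    have hbz : b z = blaschkeFun ρ3 [e3] ((blaschkeFun ρ4 [d4] z) ^ nb) := by
      have h := heqb' hz
      simpa only [Function.comp_apply] using h
    have hbzm : b z ∈ unitDisk := hbmaps z hz
    have huna : ((blaschkeFun ρ4 [d4] z) ^ nb) ^ na ∈ unitDisk :=
      pow_mem_disk hu (by omega)
    have hstep : a (b z) = blaschkeFun ρ5 [e5] (((blaschkeFun ρ4 [d4] z) ^ nb) ^ na) := by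
      have h := heqa' hbzm
      simp only [Function.comp_apply] at h
      rw [h, hbz, hμρ _ hu, mul_pow, ← aut_zero_eval (ρμ ^ na)]
      exact heq5 _ huna
    have hpow : ((blaschkeFun ρ4 [d4] z) ^ nb) ^ na = (δb z) ^ (na * nb) := by
      rw [← hf4, ← pow_mul, Nat.mul_comm]
    simp only [Function.comp_apply]
    rw [hstep, hpow]
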